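/- F_N has constant term 1 and is hence invertible in R⟦q⟧; for every j ≥ 0 and every N ≥ j, the coefficient of q^j in F_N^{−1} is a polynomial of degree at most j in x whose coefficient of x^j equals (−1)^j·(j+1). -/

import Mathlib

noncomputable section

/-- The truncated product expansion `F_N` of `−φ_{−2,1}(τ,z)/x` in `ℚ[x]⟦q⟧`:
`F_N = ∏_{m=1}^{N} (1 + (x−2)q^m + q^{2m})² · ∏_{m=1}^{N} (1 − q^m)^{−4}`. -/
def F (N : ℕ) : PowerSeries (Polynomial ℚ) :=
  (∏ m ∈ Finset.Icc 1 N,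
      (1 + PowerSeries.C (Polynomial.X - 2 : Polynomial ℚ) * PowerSeries.X ^ m
         + PowerSeries.X ^ (2 * m)) ^ 2) *
  Ring.inverse (∏ m ∈ Finset.Icc 1 N, (1 - PowerSeries.X ^ m) ^ 4)

namespace CoeffInvFAux

open Polynomial

/-- q^j coefficient has x-degree ≤ j. -/
def P (f : PowerSeries (Polynomial ℚ)) : Prop :=
  ∀ j, (PowerSeries.coeff j f).natDegree ≤ j

/-- leading-part map. -/
def L (f : PowerSeries (Polynomial ℚ)) : PowerSeries ℚ :=
  PowerSeries.mk fun j => (PowerSeries.coeff j f).coeff j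

@[simp] lemma coeff_L (f : PowerSeries (Polynomial ℚ)) (j : ℕ) :
    PowerSeries.coeff j (L f) = (PowerSeries.coeff j f).coeff j := by
  simp [L]

lemma P_one : P 1 := by
  intro j
  rw [PowerSeries.coeff_one]
  split <;> simp

lemma L_one : L 1 = 1 := by
  ext j
  rw [coeff_L, PowerSeries.coeff_one, PowerSeries.coeff_one]
  split <;> simp_all

lemma P_mul {f g} (hf : P f) (hg : P g) : P (f * g) := by
  intro j
  rw [PowerSeries.coeff_mul]
  apply natDegree_sum_le_of_forall_le
  intro p hp
  rw [Finset.HasAntidiagonal.mem_antidiagonal] at hp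
  calc (PowerSeries.coeff p.1 f * PowerSeries.coeff p.2 g).natDegree
      ≤ _ + _ := natDegree_mul_le
    _ ≤ p.1 + p.2 := add_le_add (hf p.1) (hg p.2)
    _ = j := hp

lemma L_mul {f g} (hf : P f) (hg : P g) : L (f * g) = L f * L g := by
  ext j
  rw [coeff_L, PowerSeries.coeff_mul, PowerSeries.coeff_mul, finset_sum_coeff]
  refine Finset.sum_congr rfl fun p hp => ?_
  rw [Finset.HasAntidiagonal.mem_antidiagonal] at hp
  rw [coeff_L, coeff_L, ← hp]
  exact coeff_mul_add_eq_of_natDegree_le (hf p.1) (hg p.2)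

lemma P_prod {s : Finset ℕ} {f : ℕ → PowerSeries (Polynomial ℚ)}
    (h : ∀ i ∈ s, P (f i)) : P (∏ i ∈ s, f i) := by
  classical
  induction s using Finset.induction_on with
  | empty => simpa using P_one
  | insert _ _ hx ih =>
    rw [Finset.prod_insert hx]
    exact P_mul (h _ (Finset.mem_insert_self _ _))
      (ih fun i hi => h i (Finset.mem_insert_of_mem hi))

lemma L_prod {s : Finset ℕ} {f : ℕ → PowerSeries (Polynomial ℚ)}
    (h : ∀ i ∈ s, P (f i)) : L (∏ i ∈ s, f i) = ∏ i ∈ s, L (f i) := by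
  classical
  induction s using Finset.induction_on with
  | empty => simpa using L_one
  | insert _ _ hx ih =>
    rw [Finset.prod_insert hx, Finset.prod_insert hx,
      L_mul (h _ (Finset.mem_insert_self _ _))
        (P_prod fun i hi => h i (Finset.mem_insert_of_mem hi)),
      ih fun i hi => h i (Finset.mem_insert_of_mem hi)]

lemma P_pow {f} (hf : P f) (n : ℕ) : P (f ^ n) := by
  induction n with
  | zero => simpa using P_one
  | succ n ih => rw [pow_succ]; exact P_mul ih hf

lemma L_pow {f} (hf : P f) (n : ℕ) : L (f ^ n) = L f ^ n := by
  induction n with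
  | zero => simpa using L_one
  | succ n ih => rw [pow_succ, pow_succ, L_mul (P_pow hf n) hf, ih]

lemma P_inv {f} (hf : P f) (h1 : PowerSeries.constantCoeff f = 1) :
    P (Ring.inverse f) := by
  have hu : IsUnit f := PowerSeries.isUnit_iff_constantCoeff.mpr (by rw [h1]; exact isUnit_one)
  have hfg : f * Ring.inverse f = 1 := Ring.mul_inverse_cancel f hu
  intro j
  induction j using Nat.strong_induction_on with
  | _ j IH =>
    have hc := congrArg (PowerSeries.coeff j) hfg
    rw [PowerSeries.coeff_mul] at hc
    have hmem : ((0 : ℕ), j) ∈ Finset.HasAntidiagonal.antidiagonal j := by simp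
    rw [← Finset.add_sum_erase _ _ hmem] at hc
    have hf0 : PowerSeries.coeff 0 f = 1 := by
      rwa [PowerSeries.coeff_zero_eq_constantCoeff]
    rw [hf0, one_mul] at hc
    have hg : PowerSeries.coeff j (Ring.inverse f) =
        PowerSeries.coeff j 1 -
          ∑ p ∈ (Finset.HasAntidiagonal.antidiagonal j).erase (0, j),
            PowerSeries.coeff p.1 f * PowerSeries.coeff p.2 (Ring.inverse f) := by
      rw [← hc]; ring
    rw [hg]
    refine le_trans (natDegree_sub_le _ _) (max_le ?_ ?_)
    · rw [PowerSeries.coeff_one]; split <;> simp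
    · apply natDegree_sum_le_of_forall_le
      intro p hp
      obtain ⟨hne, hpmem⟩ := Finset.mem_erase.mp hp
      rw [Finset.HasAntidiagonal.mem_antidiagonal] at hpmem
      have hp2 : p.2 < j := by
        by_contra hcon
        push_neg at hcon
        have h1 : p.1 = 0 := by omega
        have h2 : p.2 = j := by omega
        exact hne (Prod.ext h1 h2)
      calc (PowerSeries.coeff p.1 f * PowerSeries.coeff p.2 (Ring.inverse f)).natDegree
          ≤ _ + _ := natDegree_mul_le
        _ ≤ p.1 + p.2 := add_le_add (hf p.1) (IH p.2 hp2)
        _ = j := hpmem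

lemma L_inv {f} (hf : P f) (h1 : PowerSeries.constantCoeff f = 1) :
    L f * L (Ring.inverse f) = 1 := by
  have hu : IsUnit f := PowerSeries.isUnit_iff_constantCoeff.mpr (by rw [h1]; exact isUnit_one)
  rw [← L_mul hf (P_inv hf h1), Ring.mul_inverse_cancel f hu, L_one]

lemma two_eq_C : (2 : ℚ[X]) = Polynomial.C 2 := (map_ofNat Polynomial.C 2).symm

lemma natDegree_XsubTwo : ((Polynomial.X : ℚ[X]) - 2).natDegree = 1 := by
  rw [two_eq_C]; exact natDegree_X_sub_C 2

lemma coeff_XsubTwo (j : ℕ) (h : j ≠ 0) :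
    ((Polynomial.X : ℚ[X]) - 2).coeff j = if j = 1 then 1 else 0 := by
  rw [two_eq_C, coeff_sub, coeff_C, if_neg h, sub_zero, Polynomial.coeff_X]
  simp [eq_comm]

/-- the factor `a m`. -/
def a (m : ℕ) : PowerSeries (Polynomial ℚ) :=
  1 + PowerSeries.C (Polynomial.X - 2 : Polynomial ℚ) * PowerSeries.X ^ m
    + PowerSeries.X ^ (2 * m)

lemma coeff_a (m j : ℕ) : PowerSeries.coeff j (a m) =
    (if j = 0 then 1 else 0) + (if j = m then Polynomial.X - 2 else 0)
      + (if j = 2 * m then 1 else 0) := by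
  rw [a, map_add, map_add, PowerSeries.coeff_one, PowerSeries.coeff_C_mul_X_pow,
    PowerSeries.coeff_X_pow]

lemma P_a {m : ℕ} (hm : 1 ≤ m) : P (a m) := by
  intro j
  rw [coeff_a]
  refine le_trans (natDegree_add_le _ _) (max_le (le_trans (natDegree_add_le _ _)
    (max_le ?_ ?_)) ?_)
  · split <;> simp
  · split
    · next h => rw [natDegree_XsubTwo]; omega
    · simp
  · split <;> simp

lemma coeffcoeff_a {m : ℕ} (hm : 1 ≤ m) (j : ℕ) :
    (PowerSeries.coeff j (a m)).coeff j =
      (if j = 0 then 1 else 0) + (if j = m ∧ m = 1 then 1 else 0) := by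
  rw [coeff_a, coeff_add, coeff_add]
  have hA : (if j = 0 then (1:ℚ[X]) else 0).coeff j = if j = 0 then 1 else 0 := by
    split
    · next h => subst h; simp
    · simp
  have hB : ((if j = m then Polynomial.X - 2 else 0) : ℚ[X]).coeff j
      = if j = m ∧ m = 1 then 1 else 0 := by
    split
    · next h =>
      subst h
      rw [coeff_XsubTwo j (by omega)]
      by_cases h2 : j = 1
      · simp [h2]
      · simp [h2]
    · next h =>
      have hc : ¬ (j = m ∧ m = 1) := fun hc => h hc.1
      simp [hc]
  have hC : (if j = 2 * m then (1:ℚ[X]) else 0).coeff j = 0 := by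
    split
    · next h =>
      subst h
      simp [Polynomial.coeff_one]
      omega
    · simp
  rw [hA, hB, hC, add_zero]

lemma L_a_one : L (a 1) = 1 + PowerSeries.X := by
  ext j
  rw [coeff_L, coeffcoeff_a le_rfl, map_add, PowerSeries.coeff_one, PowerSeries.coeff_X]
  rcases j with _ | _ | j <;> simp

lemma L_a {m : ℕ} (hm : 2 ≤ m) : L (a m) = 1 := by
  ext j
  rw [coeff_L, coeffcoeff_a (by omega), PowerSeries.coeff_one]
  have : ¬ (j = m ∧ m = 1) := by omega
  simp [this]

/-- the factor `b m`. -/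
def b (m : ℕ) : PowerSeries (Polynomial ℚ) := 1 - PowerSeries.X ^ m

lemma coeff_b (m j : ℕ) : PowerSeries.coeff j (b m) =
    (if j = 0 then 1 else 0) - (if j = m then 1 else 0) := by
  rw [b, map_sub, PowerSeries.coeff_one, PowerSeries.coeff_X_pow]

lemma P_b (m : ℕ) : P (b m) := by
  intro j
  rw [coeff_b]
  refine le_trans (natDegree_sub_le _ _) (max_le ?_ ?_) <;> split <;> simp

lemma L_b {m : ℕ} (hm : 1 ≤ m) : L (b m) = 1 := by
  ext j
  rw [coeff_L, coeff_b, PowerSeries.coeff_one, coeff_sub]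
  by_cases h0 : j = 0
  · subst h0
    have : ¬ ((0:ℕ) = m) := by omega
    simp [this]
  · simp only [h0, if_false]
    split
    · next h => subst h; simp [Polynomial.coeff_one, h0]
    · simp

/-- the target leading series. -/
def g : PowerSeries ℚ := PowerSeries.mk fun j => (-1 : ℚ) ^ j * (j + 1)

lemma one_add_X_sq_mul_g : ((1 + PowerSeries.X) ^ 2 : PowerSeries ℚ) * g = 1 := by
  have hexp : ((1 + PowerSeries.X) ^ 2 : PowerSeries ℚ) * g
      = g + PowerSeries.X * g + PowerSeries.X * g
        + PowerSeries.X ^ 2 * g := by ring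
  rw [hexp]
  ext n
  rw [map_add, map_add, map_add, PowerSeries.coeff_one]
  rcases n with _ | _ | n
  · simp [g, PowerSeries.coeff_X_pow_mul']
  · rw [PowerSeries.coeff_succ_X_mul]
    simp [g, PowerSeries.coeff_X_pow_mul']
    try ring
  · rw [PowerSeries.coeff_succ_X_mul,
      show n + 1 + 1 = n + 2 by omega, PowerSeries.coeff_X_pow_mul g 2 n,
      if_neg (by omega : ¬ n + 2 = 0)]
    simp only [g, PowerSeries.coeff_mk]
    push_cast
    simp [pow_succ]
    ring

lemma cc_b {m : ℕ} (hm : 1 ≤ m) : PowerSeries.constantCoeff (b m) = 1 := by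
  rw [b, map_sub, map_one, map_pow, PowerSeries.constantCoeff_X,
    zero_pow (by omega : m ≠ 0), sub_zero]

lemma cc_a {m : ℕ} (hm : 1 ≤ m) : PowerSeries.constantCoeff (a m) = 1 := by
  rw [a, map_add, map_add, map_one, map_mul, map_pow, PowerSeries.constantCoeff_X,
    map_pow, PowerSeries.constantCoeff_X, zero_pow (by omega : m ≠ 0),
    zero_pow (by omega : 2 * m ≠ 0), mul_zero, add_zero, add_zero]

end CoeffInvFAux

open CoeffInvFAux

/-- `F_N` has constant term `1` (hence is invertible in `ℚ[x]⟦q⟧`), and for every `j ≥ 0`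
and every `N ≥ j`, the coefficient of `q^j` in `F_N⁻¹` is a polynomial of degree at most `j`
in `x` whose coefficient of `x^j` equals `(−1)^j·(j+1)`. -/
theorem coeff_inv_F (N : ℕ) (hN : 1 ≤ N) :
    (PowerSeries.constantCoeff (F N) = 1 ∧ IsUnit (F N)) ∧
    ∀ j : ℕ, j ≤ N →
      (PowerSeries.coeff j (Ring.inverse (F N))).degree ≤ (j : WithBot ℕ) ∧
      (PowerSeries.coeff j (Ring.inverse (F N))).coeff j =
        (-1 : ℚ) ^ j * (j + 1) := by
  classical
  set A := ∏ m ∈ Finset.Icc 1 N,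
      (1 + PowerSeries.C (Polynomial.X - 2 : Polynomial ℚ) * PowerSeries.X ^ m
         + PowerSeries.X ^ (2 * m)) ^ 2 with hAdef
  set B : PowerSeries (Polynomial ℚ) := ∏ m ∈ Finset.Icc 1 N, (1 - PowerSeries.X ^ m) ^ 4 with hBdef
  have hA' : A = ∏ m ∈ Finset.Icc 1 N, a m ^ 2 := rfl
  have hB' : B = ∏ m ∈ Finset.Icc 1 N, b m ^ 4 := rfl
  have hFA : F N = A * Ring.inverse B := rfl
  have hmem : ∀ m ∈ Finset.Icc 1 N, 1 ≤ m := fun m hm => (Finset.mem_Icc.mp hm).1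
  have hPA : P A := by
    rw [hA']; exact P_prod fun m hm => P_pow (P_a (hmem m hm)) 2
  have hPB : P B := by
    rw [hB']; exact P_prod fun m hm => P_pow (P_b m) 4
  have hccB : PowerSeries.constantCoeff B = 1 := by
    rw [hB', map_prod]
    exact Finset.prod_eq_one fun m hm => by rw [map_pow, cc_b (hmem m hm), one_pow]
  have hccA : PowerSeries.constantCoeff A = 1 := by
    rw [hA', map_prod]
    exact Finset.prod_eq_one fun m hm => by rw [map_pow, cc_a (hmem m hm), one_pow]
  have hPBi : P (Ring.inverse B) := P_inv hPB hccB
  have hLB : L B = 1 := by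
    rw [hB', L_prod fun m hm => P_pow (P_b m) 4]
    exact Finset.prod_eq_one fun m hm => by
      rw [L_pow (P_b m) 4, L_b (hmem m hm), one_pow]
  have hLBi : L (Ring.inverse B) = 1 := by
    have h := L_inv hPB hccB
    rwa [hLB, one_mul] at h
  have hLA : L A = (1 + PowerSeries.X) ^ 2 := by
    rw [hA', L_prod fun m hm => P_pow (P_a (hmem m hm)) 2]
    rw [Finset.prod_eq_single_of_mem 1 (Finset.mem_Icc.mpr ⟨le_rfl, hN⟩)
      (fun m hm hne => by
        rw [L_pow (P_a (hmem m hm)) 2, L_a (by have := hmem m hm; omega), one_pow])]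
    rw [L_pow (P_a le_rfl) 2, L_a_one]
  have hPF : P (F N) := by rw [hFA]; exact P_mul hPA hPBi
  have huB : IsUnit B := PowerSeries.isUnit_iff_constantCoeff.mpr
    (by rw [hccB]; exact isUnit_one)
  have hccBi : PowerSeries.constantCoeff (Ring.inverse B) = 1 := by
    have h := congrArg (PowerSeries.constantCoeff (R := Polynomial ℚ))
      (Ring.mul_inverse_cancel B huB)
    rwa [map_mul, hccB, one_mul, map_one] at h
  have hccF : PowerSeries.constantCoeff (F N) = 1 := by
    rw [hFA, map_mul, hccA, one_mul, hccBi]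
  have huF : IsUnit (F N) := PowerSeries.isUnit_iff_constantCoeff.mpr
    (by rw [hccF]; exact isUnit_one)
  have hPFi : P (Ring.inverse (F N)) := P_inv hPF hccF
  have hLF : L (F N) = (1 + PowerSeries.X) ^ 2 := by
    rw [hFA, L_mul hPA hPBi, hLA, hLBi, mul_one]
  have hu2 : IsUnit ((1 + PowerSeries.X) ^ 2 : PowerSeries ℚ) :=
    IsUnit.of_mul_eq_one _ one_add_X_sq_mul_g
  have hLFi : L (Ring.inverse (F N)) = g := by
    apply hu2.mul_left_cancel
    rw [one_add_X_sq_mul_g, ← hLF, L_inv hPF hccF]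
  refine ⟨⟨hccF, huF⟩, fun j _ => ⟨?_, ?_⟩⟩
  · exact Polynomial.natDegree_le_iff_degree_le.mp (hPFi j)
  · have h := congrArg (PowerSeries.coeff j) hLFi
    rw [coeff_L] at h
    rw [h, g, PowerSeries.coeff_mk]

end
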